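/- Let M be a manifold, Φ a continuous flow on M, and x ∈ M a periodic point of Φ with period λ(x). Then x is quasi-regular and λ(x)·A_x = [C_x], where [C_x] is the integral homology class in H_1(M;ℝ) determined by the orbit of x under Φ. -/

import Mathlib

open Filter

noncomputable section

private lemma aux_floor_div {c : ℝ} (hc : 0 < c) :
    Tendsto (fun T : ℝ => (⌊T / c⌋ : ℝ) / T) atTop (nhds (1 / c)) := by
  have h0 : Tendsto (fun T : ℝ => 1 / c - 1 / T) atTop (nhds (1 / c)) := by
    have := tendsto_const_nhds (α := ℝ) (x := 1 / c) (f := atTop).sub tendsto_inv_atTop_zero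
    simpa [one_div] using this
  apply tendsto_of_tendsto_of_tendsto_of_le_of_le' h0 tendsto_const_nhds
  · filter_upwards [eventually_gt_atTop 0] with T hT
    have h1 : T / c - 1 ≤ (⌊T / c⌋ : ℝ) := by
      have := Int.sub_one_lt_floor (T / c); linarith
    have h2 : (T / c - 1) / T ≤ (⌊T / c⌋ : ℝ) / T := by
      exact div_le_div_of_nonneg_right h1 hT.le
    have h3 : (T / c - 1) / T = 1 / c - 1 / T := by
      field_simp
    linarith
  · filter_upwards [eventually_gt_atTop 0] with T hT
    have h1 : (⌊T / c⌋ : ℝ) ≤ T / c := Int.floor_le _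
    have h2 : (⌊T / c⌋ : ℝ) / T ≤ (T / c) / T := div_le_div_of_nonneg_right h1 hT.le
    have h3 : (T / c) / T = 1 / c := by
      field_simp
    linarith

private lemma avg_periodic {g : ℝ → ℝ} {c : ℝ} (hg : Function.Periodic g c) (hc : 0 < c)
    (hint : ∀ t₁ t₂ : ℝ, IntervalIntegrable g MeasureTheory.volume t₁ t₂) :
    Tendsto (fun T : ℝ => (1 / T) * ∫ t in (0:ℝ)..T, g t) atTop
      (nhds ((1 / c) * ∫ t in (0:ℝ)..c, g t)) := by
  set I := ∫ t in (0:ℝ)..c, g t with hI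
  have hb : ∀ K : ℝ, Tendsto (fun T : ℝ => (1 / T) * (K + (⌊T / c⌋ : ℝ) * I)) atTop
      (nhds ((1 / c) * I)) := by
    intro K
    have h1 := (aux_floor_div hc).mul_const I
    have h2 : Tendsto (fun T : ℝ => K * (1 / T)) atTop (nhds 0) := by
      have := tendsto_inv_atTop_zero (𝕜 := ℝ).const_mul K
      simpa [one_div] using this
    have h3 := h2.add h1
    rw [zero_add] at h3
    refine Tendsto.congr (fun T => by ring) h3
  apply tendsto_of_tendsto_of_tendsto_of_le_of_le'
    (hb (sInf ((fun t => ∫ s in (0:ℝ)..t, g s) '' Set.Icc 0 c)))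
    (hb (sSup ((fun t => ∫ s in (0:ℝ)..t, g s) '' Set.Icc 0 c)))
  · filter_upwards [eventually_gt_atTop 0] with T hT
    have h := hg.sInf_add_zsmul_le_integral_of_pos (hint 0 c) hc T
    rw [zsmul_eq_mul] at h
    have := mul_le_mul_of_nonneg_left h (le_of_lt (one_div_pos.mpr hT))
    exact this
  · filter_upwards [eventually_gt_atTop 0] with T hT
    have h := hg.integral_le_sSup_add_zsmul_of_pos (hint 0 c) hc T
    rw [zsmul_eq_mul] at h
    have := mul_le_mul_of_nonneg_left h (le_of_lt (one_div_pos.mpr hT))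
    exact this

private lemma periodic_intervalIntegrable {g : ℝ → ℝ} {c : ℝ} (hg : Function.Periodic g c)
    (hc : 0 < c) (h0 : IntervalIntegrable g MeasureTheory.volume 0 c) :
    ∀ t₁ t₂ : ℝ, IntervalIntegrable g MeasureTheory.volume t₁ t₂ := by
  have htrans : ∀ k : ℤ, IntervalIntegrable g MeasureTheory.volume ((k:ℝ) * c) ((k:ℝ) * c + c) := by
    intro k
    have h1 := h0.comp_add_right (-((k:ℝ) * c))
    have he : (fun x => g (x + -((k:ℝ) * c))) = g := funext fun y => by
      have := (hg.zsmul (-k)) y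
      simpa [zsmul_eq_mul] using this
    rw [he] at h1
    simpa [sub_neg_eq_add, add_comm] using h1
  have hnat : ∀ n : ℕ, IntervalIntegrable g MeasureTheory.volume 0 ((n:ℝ) * c) := by
    intro n
    induction n with
    | zero => simp
    | succ n ih =>
      refine ih.trans ?_
      have h := htrans (n : ℤ)
      push_cast at h ⊢
      have he : ((n:ℝ) + 1) * c = (n:ℝ) * c + c := by ring
      rw [he]
      exact h
  have hneg : ∀ n : ℕ, IntervalIntegrable g MeasureTheory.volume (-((n:ℝ) * c)) 0 := by
    intro n
    induction n with
    | zero => simp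
    | succ n ih =>
      refine IntervalIntegrable.trans ?_ ih
      have h := htrans (-(n : ℤ) - 1)
      push_cast at h ⊢
      have e1 : -(((n:ℝ) + 1) * c) = (-(n:ℝ) - 1) * c := by ring
      have e2 : -((n:ℝ) * c) = (-(n:ℝ) - 1) * c + c := by ring
      rw [e1, e2]
      exact h
  intro t₁ t₂
  obtain ⟨n, hn⟩ := exists_nat_gt (max |t₁| |t₂| / c)
  have hnc : max |t₁| |t₂| < (n:ℝ) * c := by
    rw [div_lt_iff₀ hc] at hn; exact hn
  have hint : IntervalIntegrable g MeasureTheory.volume (-((n:ℝ) * c)) ((n:ℝ) * c) :=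
    (hneg n).trans (hnat n)
  apply hint.mono_set
  have h1 : |t₁| < (n:ℝ) * c := lt_of_le_of_lt (le_max_left _ _) hnc
  have h2 : |t₂| < (n:ℝ) * c := lt_of_le_of_lt (le_max_right _ _) hnc
  rw [abs_lt] at h1 h2
  apply Set.uIcc_subset_uIcc <;> rw [Set.mem_uIcc] <;>
    exact Or.inl ⟨by linarith, by linarith⟩

private lemma key_aux {M X : Type} [TopologicalSpace M] [TopologicalSpace X] [T2Space X]
    (Φ : ℝ → M → M) (hΦc : Continuous fun q : ℝ × M => Φ q.1 q.2)
    (hΦ0 : ∀ x, Φ 0 x = x) (hΦadd : ∀ s t x, Φ (s + t) x = Φ s (Φ t x))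
    (x : M) (hper : ∃ t : ℝ, 0 < t ∧ Φ t x = x)
    (lam : ℝ) (hlam : lam = sInf {t : ℝ | 0 < t ∧ Φ t x = x})
    (u : M → X) (hu : Continuous u) :
    Function.Periodic (fun t => u (Φ t x)) lam ∧ (lam = 0 → ∀ t, u (Φ t x) = u x) := by
  set A := {t : ℝ | 0 < t ∧ Φ t x = x} with hA
  have hA_ne : A.Nonempty := hper
  have hA_bdd : BddBelow A := ⟨0, fun t ht => ht.1.le⟩
  have hψc : Continuous (fun t : ℝ => u (Φ t x)) :=
    hu.comp (hΦc.comp (continuous_id.prodMk continuous_const))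
  set ψ := fun t : ℝ => u (Φ t x) with hψ
  set P := {c : ℝ | Function.Periodic ψ c} with hP
  have hPclosed : IsClosed P := by
    have hPe : P = ⋂ s : ℝ, {c : ℝ | ψ (s + c) = ψ s} := by
      ext c
      simp only [Set.mem_iInter, Set.mem_setOf_eq, hP]
      exact Iff.rfl
    rw [hPe]
    exact isClosed_iInter fun s =>
      isClosed_eq (hψc.comp (continuous_const.add continuous_id)) continuous_const
  have hAP : A ⊆ P := by
    intro a ha s
    show u (Φ (s + a) x) = u (Φ s x)
    rw [hΦadd, ha.2]
  have hlamP : lam ∈ P := by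
    have h1 : lam ∈ closure A := by
      rw [hlam]; exact csInf_mem_closure hA_ne hA_bdd
    exact hPclosed.closure_subset ((closure_mono hAP) h1)
  refine ⟨hlamP, ?_⟩
  intro h0 t
  have htP : t ∈ P := by
    apply hPclosed.closure_subset
    rw [Metric.mem_closure_iff]
    intro ε hε
    have hslt : sInf A < ε := by rw [← hlam, h0]; exact hε
    obtain ⟨a, haA, haε⟩ := (csInf_lt_iff hA_bdd hA_ne).mp hslt
    refine ⟨(⌊t / a⌋ : ℝ) * a, ?_, ?_⟩
    · have := (hAP haA).zsmul ⌊t / a⌋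
      show Function.Periodic ψ _
      simpa [zsmul_eq_mul] using this
    · have ha0 : 0 < a := haA.1
      rw [Real.dist_eq]
      have h1 : (⌊t / a⌋ : ℝ) ≤ t / a := Int.floor_le _
      have h2 : t / a < ⌊t / a⌋ + 1 := Int.lt_floor_add_one _
      have hm1 : (⌊t / a⌋ : ℝ) * a ≤ t := by
        have := mul_le_mul_of_nonneg_right h1 ha0.le
        rwa [div_mul_cancel₀ _ ha0.ne'] at this
      have hm2 : t < ((⌊t / a⌋ : ℝ) + 1) * a := by
        have := mul_lt_mul_of_pos_right h2 ha0
        rwa [div_mul_cancel₀ _ ha0.ne'] at this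
      have habs : |t - (⌊t / a⌋ : ℝ) * a| < a := by
        rw [abs_lt]
        constructor <;> nlinarith
      exact lt_trans habs haε
  have h1 := htP 0
  simp only [zero_add] at h1
  show ψ t = u x
  rw [h1, hψ]
  simp [hΦ0]

/-- Let `M` be a manifold, `Φ` a continuous flow on `M`, and `x ∈ M` a
periodic point of `Φ` with (minimal) period `λ(x) = inf {t > 0 : Φ_t(x) = x}`.
Then:
* `x` is quasi-regular: for every continuous `g : M → ℝ` the time average
  `(1/T) ∫₀ᵀ g(Φ_t(x)) dt` converges as `T → ∞`; and
* `λ(x) · A_x = [C_x]`: for every smooth `f : M → S¹` (realized as a continuous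
  `f : M → ℂ` of unit norm, differentiable along the orbit of `x`), the asymptotic
  cycle `A_x[f] = lim_{T→∞} (1/(2πiT)) ∫₀ᵀ f'(Φ_t(x))/f(Φ_t(x)) dt` exists and
  `λ(x) · A_x[f]` equals the pairing `[C_x]([f]) = ∫_{C_x} ω_f =
  (1/(2πi)) ∫₀^{λ(x)} f'(Φ_t(x))/f(Φ_t(x)) dt` of `[f]` with the integral homology
  class determined by the orbit of `x`.  (Since `f'/f` is purely imaginary, these
  expressions are written below via `(1/2π)·Im(f'/f)`.) -/
theorem statement4 {M : Type} [TopologicalSpace M]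
    (Φ : ℝ → M → M) (hΦc : Continuous fun q : ℝ × M => Φ q.1 q.2)
    (hΦ0 : ∀ x, Φ 0 x = x) (hΦadd : ∀ s t x, Φ (s + t) x = Φ s (Φ t x))
    (x : M)
    (hper : ∃ t : ℝ, 0 < t ∧ Φ t x = x)
    (lam : ℝ) (hlam : lam = sInf {t : ℝ | 0 < t ∧ Φ t x = x}) :
    (∀ g : M → ℝ, Continuous g → ∃ L : ℝ,
        Tendsto (fun T : ℝ => (1 / T) * ∫ t in (0:ℝ)..T, g (Φ t x))
          atTop (nhds L)) ∧
    (∀ f : M → ℂ, Continuous f → (∀ y, ‖f y‖ = 1) →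
        Differentiable ℝ (fun t : ℝ => f (Φ t x)) →
        Tendsto
          (fun T : ℝ => (1 / (2 * Real.pi * T)) *
            ∫ t in (0:ℝ)..T, (deriv (fun s : ℝ => f (Φ s x)) t / f (Φ t x)).im)
          atTop
          (nhds ((1 / lam) * ((1 / (2 * Real.pi)) *
            ∫ t in (0:ℝ)..lam, (deriv (fun s : ℝ => f (Φ s x)) t / f (Φ t x)).im)))) := by
  have hA_ne : ({t : ℝ | 0 < t ∧ Φ t x = x}).Nonempty := hper
  have hA_bdd : BddBelow {t : ℝ | 0 < t ∧ Φ t x = x} := ⟨0, fun t ht => ht.1.le⟩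
  have hlam0 : 0 ≤ lam := by
    rw [hlam]; exact le_csInf hA_ne fun t ht => ht.1.le
  constructor
  · intro g hg
    have key := key_aux Φ hΦc hΦ0 hΦadd x hper lam hlam g hg
    have hψc : Continuous (fun t : ℝ => g (Φ t x)) :=
      hg.comp (hΦc.comp (continuous_id.prodMk continuous_const))
    rcases lt_or_eq_of_le hlam0 with hpos | h0
    · exact ⟨_, avg_periodic key.1 hpos (fun t₁ t₂ => hψc.intervalIntegrable t₁ t₂)⟩
    · refine ⟨g x, ?_⟩
      have hconst := key.2 h0.symm
      refine Tendsto.congr' ?_ (tendsto_const_nhds (x := g x))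
      filter_upwards [eventually_ge_atTop 1] with T hT
      have hTi : (∫ t in (0:ℝ)..T, g (Φ t x)) = (T - 0) • g x := by
        simp_rw [hconst]
        exact intervalIntegral.integral_const _
      rw [hTi]
      have hT0 : T ≠ 0 := by linarith
      simp [smul_eq_mul]
      field_simp
  · intro f hf hnorm hdiff
    have key := key_aux Φ hΦc hΦ0 hΦadd x hper lam hlam f hf
    rcases lt_or_eq_of_le hlam0 with hpos | h0
    · have hper_h : Function.Periodic (fun t : ℝ => f (Φ t x)) lam := key.1
      have hph : ∀ t, f (Φ (t + lam) x) = f (Φ t x) := fun t => hper_h t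
      have hder_per : Function.Periodic (deriv (fun t : ℝ => f (Φ t x))) lam := by
        intro t
        have heq : (fun s : ℝ => f (Φ (s + lam) x)) = (fun s : ℝ => f (Φ s x)) :=
          funext fun s => hph s
        calc deriv (fun s : ℝ => f (Φ s x)) (t + lam)
            = deriv (fun s : ℝ => f (Φ (s + lam) x)) t := (deriv_comp_add_const _ _ _).symm
          _ = deriv (fun s : ℝ => f (Φ s x)) t := by rw [heq]
      set G := fun t : ℝ => (deriv (fun s : ℝ => f (Φ s x)) t / f (Φ t x)).im with hGdef
      have hG_per : Function.Periodic G lam := by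
        intro t
        simp only [hGdef]
        rw [hder_per t, hph t]
      by_cases hint : IntervalIntegrable G MeasureTheory.volume 0 lam
      · have hint' := periodic_intervalIntegrable hG_per hpos hint
        have h1 := (avg_periodic hG_per hpos hint').const_mul (1 / (2 * Real.pi))
        have h2 : (1 / lam) * ((1 / (2 * Real.pi)) * ∫ t in (0:ℝ)..lam, G t)
            = (1 / (2 * Real.pi)) * ((1 / lam) * ∫ t in (0:ℝ)..lam, G t) := by ring
        rw [h2]
        exact Tendsto.congr (fun T => by ring) h1
      · have hz : (∫ t in (0:ℝ)..lam, G t) = 0 := intervalIntegral.integral_undef hint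
        rw [hz]
        have h2 : (1 / lam) * ((1 / (2 * Real.pi)) * (0:ℝ)) = 0 := by ring
        rw [h2]
        refine Tendsto.congr' ?_ (tendsto_const_nhds (x := (0:ℝ)))
        filter_upwards [eventually_ge_atTop lam] with T hT
        have hni : ¬ IntervalIntegrable G MeasureTheory.volume 0 T := by
          intro hTi
          apply hint
          apply hTi.mono_set
          rw [Set.uIcc_of_le hpos.le, Set.uIcc_of_le (by linarith)]
          exact Set.Icc_subset_Icc le_rfl hT
        rw [intervalIntegral.integral_undef hni, mul_zero]
    · have hconst := key.2 h0.symm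
      simp only [hconst, deriv_const', zero_div, Complex.zero_im,
        intervalIntegral.integral_zero, mul_zero]
      exact tendsto_const_nhds
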